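/- A completely positive trace-preserving map $\Phi$ is creation-incoherent ($\Phi\Delta = \Delta\Phi\Delta$) if and only if $\Phi^{a,a}_{b,c} = p(b|a)\,\delta_{b,c}$ for all $a,b,c$ (where $p(b|a)\geq 0$, $\sum_b p(b|a)=1$) together with the trace-preservation condition $\sum_a \Phi^{b,d}_{a,a} = \delta_{b,d}$. -/

import Mathlib

open Matrix
open scoped ComplexOrder

noncomputable def deph {ι : Type} [Fintype ι] [DecidableEq ι] :
    Matrix ι ι ℂ →ₗ[ℂ] Matrix ι ι ℂ where
  toFun ρ := Matrix.diagonal fun i => ρ i i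
  map_add' ρ σ := by
    ext i j
    by_cases h : i = j <;> simp [Matrix.diagonal_apply, h]
  map_smul' c ρ := by
    ext i j
    by_cases h : i = j <;> simp [Matrix.diagonal_apply, h]

def IsKrausChannel {ι κ : Type} [Fintype ι] [DecidableEq ι] [Fintype κ] [DecidableEq κ]
    (Φ : Matrix ι ι ℂ →ₗ[ℂ] Matrix κ κ ℂ) : Prop :=
  ∃ (N : ℕ) (K : Fin N → Matrix κ ι ℂ),
    (∀ ρ, Φ ρ = ∑ n, K n * ρ * (K n)ᴴ) ∧ (∑ n, (K n)ᴴ * K n = 1)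

/-- Creation-incoherent: `Φ ∘ Δ = Δ ∘ Φ ∘ Δ`. -/
def IsCI {ι κ : Type} [Fintype ι] [DecidableEq ι] [Fintype κ] [DecidableEq κ]
    (Φ : Matrix ι ι ℂ →ₗ[ℂ] Matrix κ κ ℂ) : Prop :=
  LinearMap.comp Φ deph = LinearMap.comp deph (LinearMap.comp Φ deph)

lemma deph_apply' {ι : Type} [Fintype ι] [DecidableEq ι] (ρ : Matrix ι ι ℂ) :
    deph ρ = Matrix.diagonal fun i => ρ i i := rfl

lemma deph_std {ι : Type} [Fintype ι] [DecidableEq ι] (a : ι) :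
    deph (Matrix.single a a (1:ℂ)) = Matrix.single a a 1 := by
  ext i j
  rw [deph_apply']
  by_cases h : i = j
  · subst h; simp [Matrix.diagonal_apply]
  · rw [Matrix.diagonal_apply_ne _ h, Matrix.single_apply_of_ne]
    rintro ⟨rfl, rfl⟩; exact h rfl

lemma kraus_entry {n m : ℕ} {N : ℕ} (K : Fin N → Matrix (Fin m) (Fin n) ℂ)
    (a : Fin n) (b c : Fin m) :
    (∑ k, K k * Matrix.single a a (1:ℂ) * (K k)ᴴ) b c
      = ∑ k, K k b a * star (K k c a) := by
  rw [Matrix.sum_apply]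
  refine Finset.sum_congr rfl fun k _ => ?_
  simp [Matrix.mul_apply, Matrix.single, Matrix.conjTranspose_apply,
    Finset.sum_mul, ite_mul, mul_ite, ite_and, Finset.sum_ite_eq, Finset.sum_ite_eq']

theorem stmt7 {n m : ℕ}
    (Φ : Matrix (Fin n) (Fin n) ℂ →ₗ[ℂ] Matrix (Fin m) (Fin m) ℂ)
    (hΦ : IsKrausChannel Φ) :
    IsCI Φ ↔
    ((∃ p : Fin m → Fin n → ℝ, (∀ b a, 0 ≤ p b a) ∧ (∀ a, ∑ b, p b a = 1) ∧
        (∀ (a : Fin n) (b c : Fin m),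
          Φ (Matrix.single a a 1) b c = if b = c then (p b a : ℂ) else 0)) ∧
      (∀ b d : Fin n, ∑ a : Fin m, Φ (Matrix.single b d 1) a a
        = if b = d then 1 else 0)) := by
  obtain ⟨N, K, hK, hK1⟩ := hΦ
  -- trace preservation
  have htr : ∀ ρ, ∑ b, Φ ρ b b = ∑ a, ρ a a := by
    intro ρ
    have h1 : Matrix.trace (Φ ρ) = Matrix.trace ρ := by
      rw [hK, Matrix.trace_sum]
      calc ∑ k, Matrix.trace (K k * ρ * (K k)ᴴ)
          = ∑ k, Matrix.trace ((K k)ᴴ * K k * ρ) := by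
            refine Finset.sum_congr rfl fun k _ => ?_
            rw [Matrix.trace_mul_cycle]
        _ = Matrix.trace ((∑ k, (K k)ᴴ * K k) * ρ) := by
            rw [Finset.sum_mul, Matrix.trace_sum]
        _ = Matrix.trace ρ := by rw [hK1, one_mul]
    simpa [Matrix.trace] using h1
  have hentry : ∀ (a : Fin n) (b c : Fin m),
      Φ (Matrix.single a a 1) b c = ∑ k, K k b a * star (K k c a) := by
    intro a b c
    rw [hK]
    exact kraus_entry K a b c
  have hreal : ∀ (a : Fin n) (b : Fin m),
      Φ (Matrix.single a a 1) b b
        = ((∑ k, Complex.normSq (K k b a) : ℝ) : ℂ) := by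
    intro a b
    rw [hentry]
    push_cast
    refine Finset.sum_congr rfl fun k _ => ?_
    exact Complex.mul_conj _
  -- second conjunct always holds
  have hsecond : ∀ b d : Fin n, ∑ a : Fin m, Φ (Matrix.single b d 1) a a
      = if b = d then 1 else 0 := by
    intro b d
    rw [htr]
    by_cases h : b = d
    · subst h; simp [Matrix.single, Finset.sum_ite_eq]
    · rw [if_neg h]
      refine Finset.sum_eq_zero fun x _ => ?_
      rw [Matrix.single_apply_of_ne]
      rintro ⟨rfl, rfl⟩; exact h rfl
  constructor
  · intro hCI
    have hoff : ∀ (a : Fin n) (b c : Fin m), b ≠ c →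
        Φ (Matrix.single a a 1) b c = 0 := by
      intro a b c hbc
      have h := LinearMap.congr_fun hCI (Matrix.single a a 1)
      simp only [LinearMap.comp_apply, deph_std] at h
      have := congrFun (congrFun h b) c
      rw [this]
      rw [deph_apply', Matrix.diagonal_apply_ne _ hbc]
    refine ⟨⟨fun b a => (Φ (Matrix.single a a 1) b b).re, ?_, ?_, ?_⟩, hsecond⟩
    · intro b a
      dsimp only
      rw [hreal, Complex.ofReal_re]
      exact Finset.sum_nonneg fun k _ => Complex.normSq_nonneg _
    · intro a
      have h1 : ∑ b, Φ (Matrix.single a a 1) b b = 1 := by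
        rw [htr]
        simp [Matrix.single, Finset.sum_ite_eq]
      have h2 := congrArg Complex.re h1
      rw [Complex.re_sum] at h2
      simpa using h2
    · intro a b c
      by_cases h : b = c
      · subst h
        rw [if_pos rfl]
        dsimp only
        conv_rhs => rw [hreal, Complex.ofReal_re]
        exact hreal a b
      · rw [if_neg h, hoff a b c h]
  · rintro ⟨⟨p, hp0, hp1, hpv⟩, -⟩
    have hdiag : ∀ a : Fin n, deph (Φ (Matrix.single a a 1))
        = Φ (Matrix.single a a 1) := by
      intro a
      ext b c
      rw [deph_apply']
      by_cases h : b = c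
      · subst h; rw [Matrix.diagonal_apply_eq]
      · rw [Matrix.diagonal_apply_ne _ h, hpv, if_neg h]
    refine LinearMap.ext fun ρ => ?_
    simp only [LinearMap.comp_apply]
    have hρ : deph ρ = ∑ a, ρ a a • Matrix.single a a (1:ℂ) := by
      ext i j
      rw [deph_apply', Matrix.sum_apply]
      by_cases h : i = j
      · subst h
        simp [Matrix.single, Finset.sum_ite_eq, Matrix.diagonal_apply]
      · rw [Matrix.diagonal_apply_ne _ h]
        refine (Finset.sum_eq_zero fun x _ => ?_).symm
        rw [Matrix.smul_apply, Matrix.single_apply_of_ne, smul_zero]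
        rintro ⟨rfl, rfl⟩; exact h rfl
    rw [hρ, map_sum, map_sum]
    refine Finset.sum_congr rfl fun a _ => ?_
    rw [LinearMap.map_smul Φ, LinearMap.map_smul deph, hdiag]
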